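/- Let K_1, K_2 ⊆ ℝ^d be ℝ-cones such that K_1 ∩ K_2 = {0}, and suppose there exists w ∈ ℝ^d such that ⟨u,w⟩ > 0 for all nonzero u ∈ K_1 ∪ K_2. Then the complexifications satisfy K_1^ℂ ∩ K_2^ℂ = {0}. -/

import Mathlib

open scoped BigOperators Pointwise

noncomputable section

/-- The Euclidean norm of a finitely-indexed vector (real or complex entries). -/
def vecEnorm {ι : Type*} [Fintype ι] {E : Type*} [Norm E] (u : ι → E) : ℝ :=
  Real.sqrt (∑ i, ‖u i‖ ^ 2)

/-- The operator norm of a real matrix induced by the Euclidean norm. -/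
def opNorm {ι : Type*} [Fintype ι] (A : Matrix ι ι ℝ) : ℝ :=
  sSup ((fun u : ι → ℝ => vecEnorm (A.mulVec u)) '' {u : ι → ℝ | vecEnorm u = 1})

/-- A multicone for a set of matrices (Definition 1.2). -/
def IsMulticone {ι : Type*} [Fintype ι] (S : Set (Matrix ι ι ℝ)) {m : ℕ}
    (K : Fin m → Set (ι → ℝ)) (w : ι → ℝ) : Prop :=
  (∀ j, IsClosed (K j)) ∧ (∀ j, Convex ℝ (K j)) ∧ (∀ j, (interior (K j)).Nonempty) ∧
  (∀ j, ∀ c : ℝ, 0 ≤ c → ∀ u ∈ K j, c • u ∈ K j) ∧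
  (∑ i, w i ^ 2 = 1) ∧
  (∀ u ∈ ⋃ j, K j, u ≠ 0 → 0 < ∑ i, u i * w i) ∧
  (∀ A ∈ S, ∀ j, ∃ ℓ, ∀ u ∈ K j, u ≠ 0 →
    A.mulVec u ∈ interior (K ℓ) ∨ -A.mulVec u ∈ interior (K ℓ)) ∧
  (∀ j₁ j₂, j₁ ≠ j₂ → K j₁ ∩ K j₂ = {0})

/-- The set of matrices is multipositive if it admits a multicone. -/
def IsMultipositive {ι : Type*} [Fintype ι] (S : Set (Matrix ι ι ℝ)) : Prop :=
  ∃ (m : ℕ) (_ : 0 < m) (K : Fin m → Set (ι → ℝ)) (w : ι → ℝ), IsMulticone S K w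

/-- The semigroup generated by a set of matrices. -/
def semigroupOf {ι : Type*} [Fintype ι] [DecidableEq ι] (S : Set (Matrix ι ι ℝ)) :
    Set (Matrix ι ι ℝ) :=
  {B | ∃ l : List (Matrix ι ι ℝ), l ≠ [] ∧ (∀ M ∈ l, M ∈ S) ∧ B = l.prod}

/-- The complexification of a set in ℝ^ι. -/
def complexify {ι : Type*} (K : Set (ι → ℝ)) : Set (ι → ℂ) :=
  {z | ∃ (c : ℂ) (u v : ι → ℝ), u ∈ K ∧ v ∈ K ∧
    z = fun i => c * (((u i : ℂ) + (v i : ℂ)) + Complex.I * ((u i : ℂ) - (v i : ℂ)))}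

/-- The action of a real matrix on complex vectors. -/
def mulVecC {ι : Type*} [Fintype ι] (A : Matrix ι ι ℝ) (z : ι → ℂ) : ι → ℂ :=
  (A.map (fun x : ℝ => (x : ℂ))).mulVec z

/-- An ℝ-cone: closed, convex, nonempty interior, positively homogeneous, proper. -/
def IsRCone {ι : Type*} [Fintype ι] (K : Set (ι → ℝ)) : Prop :=
  IsClosed K ∧ Convex ℝ K ∧ (interior K).Nonempty ∧
  (∀ c : ℝ, 0 < c → c • K = K) ∧ K ∩ (-K) = {0}

end

lemma cone_zero {ι : Type*} [Fintype ι] {K : Set (ι → ℝ)} (h : IsRCone K) : (0 : ι → ℝ) ∈ K := by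
  have h0 : (0 : ι → ℝ) ∈ K ∩ (-K) := by rw [h.2.2.2.2]; rfl
  exact h0.1

lemma cone_smul {ι : Type*} [Fintype ι] {K : Set (ι → ℝ)} (h : IsRCone K) {c : ℝ} (hc : 0 ≤ c)
    {u : ι → ℝ} (hu : u ∈ K) : c • u ∈ K := by
  rcases hc.eq_or_lt with rfl | hc'
  · simpa using cone_zero h
  · rw [← h.2.2.2.1 c hc']
    exact Set.smul_mem_smul_set hu

lemma cone_add {ι : Type*} [Fintype ι] {K : Set (ι → ℝ)} (h : IsRCone K)
    {u v : ι → ℝ} (hu : u ∈ K) (hv : v ∈ K) : u + v ∈ K := by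
  have hm := h.2.1 hu hv (by norm_num : (0:ℝ) ≤ 1/2) (by norm_num : (0:ℝ) ≤ 1/2) (by norm_num)
  have h2 := cone_smul h (by norm_num : (0:ℝ) ≤ 2) hm
  convert h2 using 1
  module

lemma sum_lin {d : ℕ} (w u v : Fin d → ℝ) (x y : ℝ) :
    ∑ i, (x * u i + y * v i) * w i = x * ∑ i, u i * w i + y * ∑ i, v i * w i := by
  simp only [add_mul, Finset.sum_add_distrib, Finset.mul_sum, mul_assoc]

/-- Lemma 3.9: complexifications of transversally disjoint ℝ-cones intersect only at 0. -/
theorem stmt15 {d : ℕ} (K₁ K₂ : Set (Fin d → ℝ)) (h₁ : IsRCone K₁) (h₂ : IsRCone K₂)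
    (hdisj : K₁ ∩ K₂ = {0}) (w : Fin d → ℝ)
    (hw : ∀ u ∈ K₁ ∪ K₂, u ≠ 0 → 0 < ∑ i, u i * w i) :
    complexify K₁ ∩ complexify K₂ = {0} := by
  have h01 : (0 : Fin d → ℝ) ∈ K₁ := cone_zero h₁
  have h02 : (0 : Fin d → ℝ) ∈ K₂ := cone_zero h₂
  have Fnonneg : ∀ u ∈ K₁ ∪ K₂, 0 ≤ ∑ i, u i * w i := by
    intro u hu
    rcases eq_or_ne u 0 with rfl | h
    · simp
    · exact (hw u hu h).le
  have Fzero : ∀ u ∈ K₁ ∪ K₂, (∑ i, u i * w i) ≤ 0 → u = 0 := by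
    intro u hu h
    by_contra hne
    exact absurd (hw u hu hne) (not_lt.2 h)
  ext z
  simp only [complexify, Set.mem_inter_iff, Set.mem_setOf_eq, Set.mem_singleton_iff]
  constructor
  · rintro ⟨⟨c₁, u₁, v₁, hu₁, hv₁, hz₁⟩, ⟨c₂, u₂, v₂, hu₂, hv₂, hz₂⟩⟩
    by_contra hz
    have hc₂ : c₂ ≠ 0 := by rintro rfl; apply hz; rw [hz₂]; funext i; simp
    have huv₁ : ¬ (u₁ = 0 ∧ v₁ = 0) := by
      rintro ⟨rfl, rfl⟩; apply hz; rw [hz₁]; funext i; simp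
    have huv₂ : ¬ (u₂ = 0 ∧ v₂ = 0) := by
      rintro ⟨rfl, rfl⟩; apply hz; rw [hz₂]; funext i; simp
    set μ : ℂ := c₁ / c₂ with hμdef
    set x : ℝ := μ.re with hxdef
    set y : ℝ := μ.im with hydef
    have key : ∀ i, u₂ i = x * u₁ i + y * v₁ i ∧ v₂ i = x * v₁ i - y * u₁ i := by
      intro i
      have h : c₂ * (((u₂ i : ℂ) + v₂ i) + Complex.I * ((u₂ i : ℂ) - v₂ i))
          = c₁ * (((u₁ i : ℂ) + v₁ i) + Complex.I * ((u₁ i : ℂ) - v₁ i)) :=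
        (congrFun hz₂ i).symm.trans (congrFun hz₁ i)
      have hμ : ((u₂ i : ℂ) + v₂ i) + Complex.I * ((u₂ i : ℂ) - v₂ i)
          = μ * (((u₁ i : ℂ) + v₁ i) + Complex.I * ((u₁ i : ℂ) - v₁ i)) := by
        rw [hμdef, div_mul_eq_mul_div, ← h, mul_div_cancel_left₀ _ hc₂]
      rw [Complex.ext_iff] at hμ
      simp [Complex.mul_re, Complex.mul_im] at hμ
      obtain ⟨hr, hi⟩ := hμ
      constructor <;> [skip; skip] <;> rw [hxdef, hydef] <;> linarith
    have hu2 : ∀ i, u₂ i = x * u₁ i + y * v₁ i := fun i => (key i).1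
    have hv2 : ∀ i, v₂ i = x * v₁ i - y * u₁ i := fun i => (key i).2
    -- F values
    have hFu2 : ∑ i, u₂ i * w i = x * ∑ i, u₁ i * w i + y * ∑ i, v₁ i * w i := by
      rw [Finset.sum_congr rfl (fun i _ => by rw [hu2 i] : ∀ i ∈ Finset.univ,
        u₂ i * w i = (x * u₁ i + y * v₁ i) * w i)]
      exact sum_lin w u₁ v₁ x y
    have hFv2 : ∑ i, v₂ i * w i = x * ∑ i, v₁ i * w i + (-y) * ∑ i, u₁ i * w i := by
      rw [Finset.sum_congr rfl (fun i _ => by rw [hv2 i]; ring : ∀ i ∈ Finset.univ,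
        v₂ i * w i = (x * v₁ i + (-y) * u₁ i) * w i)]
      exact sum_lin w v₁ u₁ x (-y)
    have ha : 0 ≤ ∑ i, u₁ i * w i := Fnonneg u₁ (Or.inl hu₁)
    have hb : 0 ≤ ∑ i, v₁ i * w i := Fnonneg v₁ (Or.inl hv₁)
    have ha2 : 0 ≤ ∑ i, u₂ i * w i := Fnonneg u₂ (Or.inr hu₂)
    have hb2 : 0 ≤ ∑ i, v₂ i * w i := Fnonneg v₂ (Or.inr hv₂)
    have hab : 0 < ∑ i, u₁ i * w i + ∑ i, v₁ i * w i := by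
      rcases not_and_or.1 huv₁ with h | h
      · have := hw u₁ (Or.inl hu₁) h; linarith
      · have := hw v₁ (Or.inl hv₁) h; linarith
    have hx : 0 ≤ x := by
      nlinarith [mul_nonneg ha2 ha, mul_nonneg hb2 hb, sq_nonneg
        ((∑ i, u₁ i * w i) - ∑ i, v₁ i * w i), mul_pos hab hab, mul_nonneg ha hb]
    have hn : 0 < x ^ 2 + y ^ 2 := by
      by_contra hn
      push_neg at hn
      have hx0 : x = 0 := by nlinarith [sq_nonneg x, sq_nonneg y]
      have hy0 : y = 0 := by nlinarith [sq_nonneg x, sq_nonneg y]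
      exact huv₂ ⟨funext fun i => by simp [hu2 i, hx0, hy0],
        funext fun i => by simp [hv2 i, hx0, hy0]⟩
    have hinvu : ∀ i, (x ^ 2 + y ^ 2) * u₁ i = x * u₂ i + (-y) * v₂ i := fun i => by
      rw [hu2 i, hv2 i]; ring
    have hinvv : ∀ i, (x ^ 2 + y ^ 2) * v₁ i = x * v₂ i + y * u₂ i := fun i => by
      rw [hu2 i, hv2 i]; ring
    have hFinvu : (x ^ 2 + y ^ 2) * ∑ i, u₁ i * w i
        = x * ∑ i, u₂ i * w i + (-y) * ∑ i, v₂ i * w i := by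
      rw [Finset.mul_sum, Finset.sum_congr rfl (fun i _ => by rw [← mul_assoc, hinvu i] :
        ∀ i ∈ Finset.univ, (x ^ 2 + y ^ 2) * (u₁ i * w i) = (x * u₂ i + (-y) * v₂ i) * w i)]
      exact sum_lin w u₂ v₂ x (-y)
    have hFinvv : (x ^ 2 + y ^ 2) * ∑ i, v₁ i * w i
        = x * ∑ i, v₂ i * w i + y * ∑ i, u₂ i * w i := by
      rw [Finset.mul_sum, Finset.sum_congr rfl (fun i _ => by rw [← mul_assoc, hinvv i] :
        ∀ i ∈ Finset.univ, (x ^ 2 + y ^ 2) * (v₁ i * w i) = (x * v₂ i + y * u₂ i) * w i)]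
      exact sum_lin w v₂ u₂ x y
    rcases le_or_gt 0 y with hy | hy
    · -- y ≥ 0 : u₂ ∈ K₁
      have hu2K1 : u₂ ∈ K₁ := by
        have heq : u₂ = x • u₁ + y • v₁ := funext fun i => by
          simp [hu2 i]
        rw [heq]
        exact cone_add h₁ (cone_smul h₁ hx hu₁) (cone_smul h₁ hy hv₁)
      have hu20 : u₂ = 0 := by
        have hm : u₂ ∈ K₁ ∩ K₂ := ⟨hu2K1, hu₂⟩
        rwa [hdisj, Set.mem_singleton_iff] at hm
      have hFu20 : ∑ i, u₂ i * w i = 0 := by rw [hu20]; simp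
      have hu10 : u₁ = 0 := by
        apply Fzero u₁ (Or.inl hu₁)
        nlinarith [mul_nonneg hy hb2]
      have hv1K2 : v₁ ∈ K₂ := by
        have heq : v₁ = (x / (x ^ 2 + y ^ 2)) • v₂ := funext fun i => by
          have h1 := hinvv i
          rw [hu20] at h1
          simp only [Pi.zero_apply, mul_zero, add_zero] at h1
          simp only [Pi.smul_apply, smul_eq_mul]
          field_simp
          linarith
        rw [heq]
        exact cone_smul h₂ (div_nonneg hx hn.le) hv₂
      have hv10 : v₁ = 0 := by
        have hm : v₁ ∈ K₁ ∩ K₂ := ⟨hv₁, hv1K2⟩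
        rwa [hdisj, Set.mem_singleton_iff] at hm
      exact huv₁ ⟨hu10, hv10⟩
    · -- y < 0 : v₂ ∈ K₁
      have hv2K1 : v₂ ∈ K₁ := by
        have heq : v₂ = x • v₁ + (-y) • u₁ := funext fun i => by
          simp [hv2 i]; ring
        rw [heq]
        exact cone_add h₁ (cone_smul h₁ hx hv₁) (cone_smul h₁ (by linarith) hu₁)
      have hv20 : v₂ = 0 := by
        have hm : v₂ ∈ K₁ ∩ K₂ := ⟨hv2K1, hv₂⟩
        rwa [hdisj, Set.mem_singleton_iff] at hm
      have hFv20 : ∑ i, v₂ i * w i = 0 := by rw [hv20]; simp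
      have hv10 : v₁ = 0 := by
        apply Fzero v₁ (Or.inl hv₁)
        nlinarith [mul_nonneg (neg_nonneg.2 hy.le) ha2]
      have hu1K2 : u₁ ∈ K₂ := by
        have heq : u₁ = (x / (x ^ 2 + y ^ 2)) • u₂ := funext fun i => by
          have h1 := hinvu i
          rw [hv20] at h1
          simp only [Pi.zero_apply, mul_zero, add_zero] at h1
          simp only [Pi.smul_apply, smul_eq_mul]
          field_simp
          linarith
        rw [heq]
        exact cone_smul h₂ (div_nonneg hx hn.le) hu₂
      have hu10 : u₁ = 0 := by
        have hm : u₁ ∈ K₁ ∩ K₂ := ⟨hu₁, hu1K2⟩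
        rwa [hdisj, Set.mem_singleton_iff] at hm
      exact huv₁ ⟨hu10, hv10⟩
  · rintro rfl
    exact ⟨⟨0, 0, 0, h01, h01, by funext i; simp⟩, ⟨0, 0, 0, h02, h02, by funext i; simp⟩⟩
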